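/- Let H₊ and H₋ be complex Hilbert spaces, let H := H₊ × H₋ be their Hilbert space direct sum, and let V : H₋ → H₊ be a bounded linear operator with adjoint V*. Define the bounded operator L on H by L(f, h) = (V h, −V* f). Then 1 + L is invertible; moreover, writing K := L ∘ (1 + L)⁻¹ and defining K̂ : H → H by K̂(f, h) := (π₊(K(f, h)), h − π₋(K(f, h))) (where π₊ and π₋ are the coordinate projections of H onto H₊ and H₋), the operator K̂ is an orthogonal projection (self-adjoint and idempotent), its range equals {(V h, h) : h ∈ H₋}, and the orthogonal complement of its range equals {(f, −V* f) : f ∈ H₊}. -/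

import Mathlib

set_option maxHeartbeats 2000000 in
open ContinuousLinearMap in
/-- For `L(f,h) = (Vh, -V*f)` on the Hilbert direct sum `H₊ ⊕ H₋`, the operator
`1 + L` is invertible, and with `K = L(1+L)⁻¹`, the operator
`K̂(f,h) = (π₊ K(f,h), h - π₋ K(f,h))` is an orthogonal projection with range
`{(Vh, h)}` and orthocomplement `{(f, -V*f)}`. -/
theorem balanced_rigidity_stmt0
    {Hp Hm : Type*}
    [NormedAddCommGroup Hp] [InnerProductSpace ℂ Hp] [CompleteSpace Hp]
    [NormedAddCommGroup Hm] [InnerProductSpace ℂ Hm] [CompleteSpace Hm]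
    (V : Hm →L[ℂ] Hp)
    (L : WithLp 2 (Hp × Hm) →L[ℂ] WithLp 2 (Hp × Hm))
    (hL : ∀ x : WithLp 2 (Hp × Hm),
      L x = (WithLp.equiv 2 (Hp × Hm)).symm (V x.snd, -(adjoint V) x.fst)) :
    IsUnit (1 + L) ∧
    ∀ K Khat : WithLp 2 (Hp × Hm) →L[ℂ] WithLp 2 (Hp × Hm),
      K = L ∘L Ring.inverse (1 + L) →
      (∀ x : WithLp 2 (Hp × Hm),
        Khat x = (WithLp.equiv 2 (Hp × Hm)).symm ((K x).fst, x.snd - (K x).snd)) →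
      IsSelfAdjoint Khat ∧
      Khat ∘L Khat = Khat ∧
      (LinearMap.range (Khat : WithLp 2 (Hp × Hm) →ₗ[ℂ] WithLp 2 (Hp × Hm)) : Set (WithLp 2 (Hp × Hm)))
        = {x : WithLp 2 (Hp × Hm) | ∃ h : Hm,
            x = (WithLp.equiv 2 (Hp × Hm)).symm (V h, h)} ∧
      ((LinearMap.range (Khat : WithLp 2 (Hp × Hm) →ₗ[ℂ] WithLp 2 (Hp × Hm)))ᗮ : Set (WithLp 2 (Hp × Hm)))
        = {x : WithLp 2 (Hp × Hm) | ∃ f : Hp,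
            x = (WithLp.equiv 2 (Hp × Hm)).symm (f, -(adjoint V) f)} := by
  -- L is skew-adjoint
  have hstar : star L = -L := by
    rw [star_eq_adjoint]
    symm
    rw [eq_adjoint_iff]
    intro x y
    rw [hL y]
    have h1 : ((-L) x) = (WithLp.toLp 2 (-(V x.snd), (adjoint V) x.fst) : WithLp 2 (Hp × Hm)) := by
      show -(L x) = _
      rw [hL x]
      exact WithLp.ofLp_injective 2 (Prod.ext (by simp) (by simp))
    rw [h1, WithLp.prod_inner_apply, WithLp.prod_inner_apply]
    show (inner ℂ (-(V x.snd)) y.fst : ℂ) + inner ℂ ((adjoint V) x.fst) y.snd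
        = inner ℂ x.fst (V y.snd) + inner ℂ x.snd (-(adjoint V) y.fst)
    rw [inner_neg_left, inner_neg_right, adjoint_inner_left, adjoint_inner_right]
    ring
  -- 1 + L is invertible
  have hpos : IsUnit ((1 + L) * (1 - L)) := by
    have h1 : (1 : WithLp 2 (Hp × Hm) →L[ℂ] WithLp 2 (Hp × Hm)) + star L * L
        = (1 + L) * (1 - L) := by
      rw [hstar]; noncomm_ring
      simp
      exact (neg_mul L L).trans (mul_neg L L).symm
    rw [← h1]
    exact (isStrictlyPositive_one.add_nonneg (star_mul_self_nonneg L)).isUnit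
  obtain ⟨w, hw⟩ := hpos
  have hwL : (↑w⁻¹ : _) * L = L * ↑w⁻¹ := by
    have hcomm : (↑w : _) * L = L * ↑w := by
      rw [hw]; noncomm_ring
      simp
      have e : -L * L = L * -L := (neg_mul L L).trans (mul_neg L L).symm
      exact congrArg₂ (· + ·) e (congrArg (L * ·) e)
    calc (↑w⁻¹ : _) * L = ↑w⁻¹ * L * (↑w * ↑w⁻¹) := by rw [w.mul_inv, mul_one]
      _ = ↑w⁻¹ * (↑w * L) * ↑w⁻¹ := by rw [hcomm]; noncomm_ring
      _ = (↑w⁻¹ * ↑w) * (L * ↑w⁻¹) := by noncomm_ring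
      _ = L * ↑w⁻¹ := by rw [w.inv_mul, one_mul]
  have hU : IsUnit (1 + L) := by
    refine ⟨⟨1 + L, (1 - L) * ↑w⁻¹, ?_, ?_⟩, rfl⟩
    · show (1 + L) * ((1 - L) * ↑w⁻¹) = 1
      rw [← mul_assoc, ← hw, w.mul_inv]
    · show ((1 - L) * ↑w⁻¹) * (1 + L) = 1
      have h2 : (↑w⁻¹ : _) * (1 + L) = (1 + L) * ↑w⁻¹ := by
        have e1 : (↑w⁻¹ : _) * (1 + L) = ↑w⁻¹ + ↑w⁻¹ * L := by noncomm_ring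
        have e2 : (1 + L) * (↑w⁻¹ : _) = ↑w⁻¹ + L * ↑w⁻¹ := by noncomm_ring
        rw [e1, e2, hwL]
      rw [mul_assoc, h2, ← mul_assoc]
      have h3 : (1 - L) * (1 + L) = (1 + L) * (1 - L) := by
        noncomm_ring
        simp
        exact (neg_mul L L).trans (mul_neg L L).symm
      rw [h3, ← hw, w.mul_inv]
  refine ⟨hU, ?_⟩
  intro K Khat hKdef hKhatdef
  obtain ⟨M, hMdef⟩ : ∃ M, M = Ring.inverse (1 + L) := ⟨_, rfl⟩
  rw [← hMdef] at hKdef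
  have hM1 : (1 + L) * M = 1 := by rw [hMdef]; exact Ring.mul_inverse_cancel _ hU
  have hM2 : M * (1 + L) = 1 := by rw [hMdef]; exact Ring.inverse_mul_cancel _ hU
  clear hMdef
  have hM1x : ∀ x, M x + L (M x) = x := by
    intro x
    have h := DFunLike.congr_fun hM1 x
    simp only [ContinuousLinearMap.mul_apply, add_apply, one_apply] at h
    exact h
  have hM2x : ∀ y, M (y + L y) = y := by
    intro y
    have h := DFunLike.congr_fun hM2 y
    simp only [ContinuousLinearMap.mul_apply, add_apply, one_apply] at h
    exact h
  -- components of x in terms of M x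
  have hcomp1 : ∀ x : WithLp 2 (Hp × Hm), x.fst = (M x).fst + V ((M x).snd) := by
    intro x
    have h := hM1x x
    rw [hL (M x)] at h
    exact (congrArg WithLp.fst h).symm
  have hcomp2 : ∀ x : WithLp 2 (Hp × Hm),
      x.snd = (M x).snd + -((adjoint V) ((M x).fst)) := by
    intro x
    have h := hM1x x
    rw [hL (M x)] at h
    exact (congrArg WithLp.snd h).symm
  have hKx : ∀ x, K x = x - M x := by
    intro x
    rw [hKdef]
    show L (M x) = x - M x
    rw [eq_sub_iff_add_eq, add_comm]
    exact hM1x x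
  have hKhat2 : ∀ x : WithLp 2 (Hp × Hm),
      Khat x = (WithLp.equiv 2 (Hp × Hm)).symm (V ((M x).snd), (M x).snd) := by
    intro x
    rw [hKhatdef x]
    refine congrArg _ (Prod.ext ?_ ?_)
    · show (K x).fst = V ((M x).snd)
      rw [hKx x]
      show x.fst - (M x).fst = V ((M x).snd)
      rw [hcomp1 x]
      exact add_sub_cancel_left _ _
    · show x.snd - (K x).snd = (M x).snd
      rw [hKx x]
      show x.snd - (x.snd - (M x).snd) = (M x).snd
      exact sub_sub_cancel _ _
  have hMgraph : ∀ h : Hm,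
      M ((WithLp.equiv 2 (Hp × Hm)).symm (V h, h))
        = (WithLp.equiv 2 (Hp × Hm)).symm (0, h) := by
    intro h
    have e : (WithLp.equiv 2 (Hp × Hm)).symm (V h, h)
        = (WithLp.equiv 2 (Hp × Hm)).symm (0, h)
          + L ((WithLp.equiv 2 (Hp × Hm)).symm (0, h)) := by
      rw [hL, ← WithLp.toLp_add]
      refine congrArg _ (Prod.ext ?_ ?_) <;>
        simp [WithLp.toLp_fst, WithLp.toLp_snd]
    rw [e, hM2x]
  -- self-adjointness
  have hsa : IsSelfAdjoint Khat := by
    rw [isSelfAdjoint_iff_isSymmetric]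
    intro x y
    show (inner ℂ (Khat x) y : ℂ) = inner ℂ x (Khat y)
    rw [hKhat2 x, hKhat2 y, WithLp.prod_inner_apply, WithLp.prod_inner_apply]
    simp only [WithLp.equiv_symm_apply, WithLp.ofLp_toLp, WithLp.ofLp_fst, WithLp.ofLp_snd]
    rw [hcomp1 y, hcomp2 y, hcomp1 x, hcomp2 x]
    rw [inner_add_right, inner_add_right, inner_add_left, inner_add_left,
      inner_neg_right, inner_neg_left, adjoint_inner_left, adjoint_inner_right]
    ring
  refine ⟨hsa, ?_, ?_, ?_⟩
  · -- idempotent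
    ext x
    rw [comp_apply]
    calc Khat (Khat x)
        = Khat ((WithLp.equiv 2 (Hp × Hm)).symm (V ((M x).snd), (M x).snd)) := by
          rw [hKhat2 x]
      _ = (WithLp.equiv 2 (Hp × Hm)).symm
            (V ((M ((WithLp.equiv 2 (Hp × Hm)).symm (V ((M x).snd), (M x).snd))).snd),
             (M ((WithLp.equiv 2 (Hp × Hm)).symm (V ((M x).snd), (M x).snd))).snd) :=
          hKhat2 _
      _ = (WithLp.equiv 2 (Hp × Hm)).symm (V ((M x).snd), (M x).snd) := by
          rw [hMgraph]
          simp [WithLp.toLp_snd]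
      _ = Khat x := (hKhat2 x).symm
  · -- range
    ext x
    simp only [SetLike.mem_coe, LinearMap.mem_range, Set.mem_setOf_eq]
    constructor
    · rintro ⟨y, rfl⟩
      exact ⟨(M y).snd, hKhat2 y⟩
    · rintro ⟨h, rfl⟩
      refine ⟨(WithLp.equiv 2 (Hp × Hm)).symm (V h, h), ?_⟩
      rw [ContinuousLinearMap.coe_coe, hKhat2, hMgraph]
      simp [WithLp.toLp_snd]
  · -- orthocomplement
    have hrangeiff : ∀ u : WithLp 2 (Hp × Hm),
        u ∈ LinearMap.range (Khat : WithLp 2 (Hp × Hm) →ₗ[ℂ] WithLp 2 (Hp × Hm))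
          ↔ ∃ h : Hm, u = (WithLp.equiv 2 (Hp × Hm)).symm (V h, h) := by
      intro u
      rw [LinearMap.mem_range]
      constructor
      · rintro ⟨y, rfl⟩
        exact ⟨(M y).snd, hKhat2 y⟩
      · rintro ⟨h, rfl⟩
        refine ⟨(WithLp.equiv 2 (Hp × Hm)).symm (V h, h), ?_⟩
        rw [ContinuousLinearMap.coe_coe, hKhat2, hMgraph]
        simp [WithLp.toLp_snd]
    ext x
    simp only [SetLike.mem_coe, Submodule.mem_orthogonal, Set.mem_setOf_eq]
    constructor
    · intro hx
      refine ⟨x.fst, ?_⟩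
      have key : ∀ h : Hm, (inner ℂ h ((adjoint V) x.fst + x.snd) : ℂ) = 0 := by
        intro h
        have hm : (WithLp.equiv 2 (Hp × Hm)).symm (V h, h) ∈ LinearMap.range (Khat : WithLp 2 (Hp × Hm) →ₗ[ℂ] WithLp 2 (Hp × Hm)) :=
          (hrangeiff _).mpr ⟨h, rfl⟩
        have h0 := hx _ hm
        rw [WithLp.prod_inner_apply] at h0
        simp only [WithLp.equiv_symm_apply, WithLp.ofLp_toLp, WithLp.ofLp_fst, WithLp.ofLp_snd] at h0
        rw [inner_add_right, adjoint_inner_right]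
        exact h0
      have h2 := key ((adjoint V) x.fst + x.snd)
      rw [inner_self_eq_zero] at h2
      have hx0 : x = (WithLp.equiv 2 (Hp × Hm)).symm (x.fst, x.snd) := rfl
      rw [hx0]
      refine congrArg _ (Prod.ext rfl ?_)
      show x.snd = -((adjoint V) x.fst)
      exact eq_neg_of_add_eq_zero_right h2
    · rintro ⟨f, rfl⟩
      intro u hu
      obtain ⟨h, rfl⟩ := (hrangeiff u).mp hu
      rw [WithLp.prod_inner_apply]
      simp only [WithLp.equiv_symm_apply, WithLp.ofLp_toLp, WithLp.ofLp_fst, WithLp.ofLp_snd]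
      rw [inner_neg_right, adjoint_inner_right]
      ring
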